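/- Let (V_0, (.,.), A_0) be a Riemannian Einstein model with Einstein constant s (Ric_0 = s(.,.)). Let (V_1, <.,.>, A_1) be the neutral signature model obtained by taking the imaginary part of the complex multilinear extension of A_0 on V_0 ⊗ C, with inner product the real part of the complex bilinear extension of (.,.). Then the Ricci operator rho_1 of A_1 satisfies rho_1(e) = -2s·ie and rho_1(ie) = 2s·e for e in V_0; in particular rho_1^2 = -4s^2 · id. -/

import Mathlib

noncomputable section

/-- The imaginary part of the complex multilinear extension of `A` to the
complexification, where `V × V` models `V ⊕ iV`. -/
def cxCurv {V : Type*} [AddCommGroup V] [Module ℝ V]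
    (A : V →ₗ[ℝ] V →ₗ[ℝ] V →ₗ[ℝ] V →ₗ[ℝ] ℝ) (u₁ u₂ u₃ u₄ : V × V) : ℝ :=
  (A u₁.2 u₂.1 u₃.1 u₄.1 + A u₁.1 u₂.2 u₃.1 u₄.1 + A u₁.1 u₂.1 u₃.2 u₄.1 +
      A u₁.1 u₂.1 u₃.1 u₄.2)
    - (A u₁.1 u₂.2 u₃.2 u₄.2 + A u₁.2 u₂.1 u₃.2 u₄.2 + A u₁.2 u₂.2 u₃.1 u₄.2 +
      A u₁.2 u₂.2 u₃.2 u₄.1)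

/-- The real part of the complex bilinear extension of the inner product;
a neutral signature inner product on `V × V`. -/
def cxForm {V : Type*} [AddCommGroup V] [Module ℝ V]
    (B : LinearMap.BilinForm ℝ V) (u v : V × V) : ℝ :=
  B u.1 v.1 - B u.2 v.2

/-- The Ricci tensor of `cxCurv A` computed with respect to the pseudo-orthonormal
basis `{(bₖ,0), (0,bₖ)}` of `V × V` (traces with signs). -/
def cxRicci {V : Type*} [AddCommGroup V] [Module ℝ V] {n : ℕ}
    (b : Module.Basis (Fin n) ℝ V)
    (A : V →ₗ[ℝ] V →ₗ[ℝ] V →ₗ[ℝ] V →ₗ[ℝ] ℝ) (u v : V × V) : ℝ :=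
  ∑ k, (cxCurv A u (b k, 0) (b k, 0) v - cxCurv A u (0, b k) (0, b k) v)

/-- If `(V, B, A)` is a Riemannian Einstein model with Einstein
constant `s`, then the Ricci operator `rho₁` of the complexified model
`(V × V, cxForm B, cxCurv A)` satisfies `rho₁(e) = -2s·(ie)`, `rho₁(ie) = 2s·e`
for `e ∈ V`; in particular `rho₁² = -4s²·id`. -/
theorem stmt_6 {V : Type*} [AddCommGroup V] [Module ℝ V] [FiniteDimensional ℝ V]
    {n : ℕ} (b : Module.Basis (Fin n) ℝ V)
    (B : LinearMap.BilinForm ℝ V) (hBsymm : ∀ x y, B x y = B y x)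
    (hBpos : ∀ x, x ≠ 0 → 0 < B x x)
    (hON : ∀ i j, B (b i) (b j) = if i = j then 1 else 0)
    (A : V →ₗ[ℝ] V →ₗ[ℝ] V →ₗ[ℝ] V →ₗ[ℝ] ℝ)
    (hpair : ∀ x y z w, A x y z w = A z w x y)
    (hanti : ∀ x y z w, A x y z w = -A y x z w)
    (hbianchi : ∀ x y z w, A x y z w + A y z x w + A z x y w = 0)
    (s : ℝ) (hEinstein : ∀ x y, (∑ k, A x (b k) (b k) y) = s * B x y)
    (rho1 : (V × V) →ₗ[ℝ] (V × V))
    (hrho1 : ∀ u v, cxForm B (rho1 u) v = cxRicci b A u v) :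
    (∀ e : V, rho1 (e, 0) = (0, -((2 * s) • e))) ∧
    (∀ e : V, rho1 (0, e) = ((2 * s) • e, 0)) ∧
    (∀ u : V × V, rho1 (rho1 u) = -((4 * s ^ 2) • u)) := by
  -- nondegeneracy of B
  have hzero : ∀ p : V, (∀ x, B p x = 0) → p = 0 := by
    intro p hp
    by_contra h
    have h1 := hBpos p h
    rw [hp p] at h1
    exact lt_irrefl 0 h1
  -- uniqueness: rho1 u is determined by hrho1
  have key : ∀ (u w : V × V), (∀ v, cxForm B w v = cxRicci b A u v) → rho1 u = w := by
    intro u w hw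
    have h1 : (rho1 u).1 = w.1 := by
      have h0 : (rho1 u).1 - w.1 = 0 := by
        apply hzero
        intro x
        have h := (hrho1 u (x, 0)).trans (hw (x, 0)).symm
        simp only [cxForm, map_zero] at h
        simp only [map_sub, LinearMap.sub_apply]
        linarith
      exact sub_eq_zero.mp h0
    have h2 : (rho1 u).2 = w.2 := by
      have h0 : (rho1 u).2 - w.2 = 0 := by
        apply hzero
        intro x
        have h := (hrho1 u (0, x)).trans (hw (0, x)).symm
        simp only [cxForm, map_zero] at h
        simp only [map_sub, LinearMap.sub_apply]
        linarith
      exact sub_eq_zero.mp h0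
    exact Prod.ext h1 h2
  -- the two Ricci computations
  have hRe : ∀ (e : V) (v : V × V), cxRicci b A (e, 0) v = 2 * s * B e v.2 := by
    intro e v
    have : cxRicci b A (e, 0) v = ∑ k, 2 * A e (b k) (b k) v.2 := by
      apply Finset.sum_congr rfl
      intro k _
      simp only [cxCurv, map_zero, LinearMap.zero_apply]
      ring
    rw [this, ← Finset.mul_sum, hEinstein]
    ring
  have hIm : ∀ (e : V) (v : V × V), cxRicci b A (0, e) v = 2 * s * B e v.1 := by
    intro e v
    have : cxRicci b A (0, e) v = ∑ k, 2 * A e (b k) (b k) v.1 := by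
      apply Finset.sum_congr rfl
      intro k _
      simp only [cxCurv, map_zero, LinearMap.zero_apply]
      ring
    rw [this, ← Finset.mul_sum, hEinstein]
    ring
  have hL : ∀ e : V, rho1 (e, 0) = (0, -((2 * s) • e)) := by
    intro e
    apply key
    intro v
    rw [hRe e v]
    simp only [cxForm, map_zero, map_neg, map_smul, LinearMap.neg_apply,
      LinearMap.zero_apply, LinearMap.smul_apply, smul_eq_mul]
    ring
  have hR : ∀ e : V, rho1 (0, e) = ((2 * s) • e, 0) := by
    intro e
    apply key
    intro v
    rw [hIm e v]
    simp only [cxForm, map_zero, map_smul, LinearMap.zero_apply,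
      LinearMap.smul_apply, smul_eq_mul]
    ring
  refine ⟨hL, hR, ?_⟩
  intro u
  have hu : u = (u.1, (0 : V)) + ((0 : V), u.2) := by simp
  rw [hu, map_add, hL u.1, hR u.2, map_add, hR, hL]
  ext <;> simp <;> module
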